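/- There is an absolute constant C > 0 with the following property: if c ≥ 1 and a_1 < ... < a_m are distinct positive integers with m ≥ 2 such that ∑_{k=1}^{m} cos(2π a_k θ) ≥ -c·√m for all real θ, then log M(a_1, ..., a_m) ≤ C · c · √m · log m. -/

import Mathlib

open Finset Real

/-- `Mfun a` is the maximum over `z` on the unit circle of `∏_k |1 - z^{a k}|`. -/
noncomputable def Mfun {m : ℕ} (a : Fin m → ℕ) : ℝ :=
  ⨆ z : Metric.sphere (0 : ℂ) 1, ∏ k, ‖(1 - (z : ℂ) ^ (a k))‖

open Filter Topology

namespace Stmt7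

noncomputable def cc (M : ℕ) : ℝ := 2 / ((M : ℝ) ^ 2 - 1)

noncomputable def TT (n M : ℕ) : ℝ := (2 * (M : ℝ) - n - 1) / (((M : ℝ) - 1) * M)

noncomputable def bb (N n : ℕ) : ℝ :=
  ∑ M ∈ Finset.Ico (n + 1) (N + 1), cc M * (1 - (n : ℝ) / M)

lemma cc_nonneg {M : ℕ} (hM : 2 ≤ M) : 0 ≤ cc M := by
  have h : (2 : ℝ) ≤ (M : ℝ) := by exact_mod_cast hM
  have : (0:ℝ) < (M:ℝ)^2 - 1 := by nlinarith
  unfold cc; positivity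

lemma telescope_step (n : ℕ) {L : ℕ} (hL : 2 ≤ L) :
    cc L * (1 - (n : ℝ) / L) = TT n L - TT n (L + 1) := by
  have h : (2 : ℝ) ≤ (L : ℝ) := by exact_mod_cast hL
  have h1 : ((L:ℝ) - 1) ≠ 0 := by nlinarith
  have h2 : (L:ℝ) ≠ 0 := by nlinarith
  have h3 : ((L:ℝ) + 1) ≠ 0 := by nlinarith
  have h4 : ((L:ℝ)^2 - 1) ≠ 0 := by nlinarith
  unfold cc TT
  push_cast
  rw [show (L:ℝ) + 1 - 1 = L by ring]
  field_simp
  ring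

lemma sum_Ico_TT (n : ℕ) {K L : ℕ} (hK : 2 ≤ K) (hKL : K ≤ L) :
    ∑ M ∈ Finset.Ico K L, cc M * (1 - (n : ℝ) / M) = TT n K - TT n L := by
  induction L, hKL using Nat.le_induction with
  | base => simp
  | succ L hKL ih =>
      rw [Finset.sum_Ico_succ_top hKL, ih, telescope_step n (le_trans hK hKL)]
      ring

lemma TT_self {n : ℕ} (hn : 1 ≤ n) : TT n (n + 1) = 1 / n := by
  have h : (1 : ℝ) ≤ (n : ℝ) := by exact_mod_cast hn
  unfold TT
  push_cast
  rw [show (2*((n:ℝ)+1) - n - 1) = (n:ℝ) + 1 by ring, show ((n:ℝ)+1-1) = (n:ℝ) by ring]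
  rw [mul_comm]
  rw [div_eq_div_iff (by nlinarith) (by nlinarith)]
  ring

lemma TT_nonneg {n M : ℕ} (hn : n + 1 ≤ M) (h2 : 2 ≤ M) : 0 ≤ TT n M := by
  have h : (2 : ℝ) ≤ (M : ℝ) := by exact_mod_cast h2
  have h' : (n : ℝ) + 1 ≤ (M : ℝ) := by exact_mod_cast hn
  unfold TT
  apply div_nonneg <;> nlinarith

lemma bb_nonneg (N n : ℕ) (hn : 1 ≤ n) : 0 ≤ bb N n := by
  apply Finset.sum_nonneg
  intro M hM
  rw [Finset.mem_Ico] at hM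
  have h2 : 2 ≤ M := le_trans (by omega) hM.1
  have hnM : (n:ℝ) ≤ (M:ℝ) := by exact_mod_cast (by omega : n ≤ M)
  have hM0 : (0:ℝ) < M := by exact_mod_cast (by omega : 0 < M)
  have : (n:ℝ)/M ≤ 1 := by rw [div_le_one hM0]; exact hnM
  have := cc_nonneg h2
  nlinarith

lemma bb_eq {N n : ℕ} (hn : 1 ≤ n) (hnN : n ≤ N) : bb N n = 1 / n - TT n (N + 1) := by
  unfold bb
  rw [sum_Ico_TT n (by omega) (by omega), TT_self hn]

lemma bb_le (N : ℕ) {n : ℕ} (hn : 1 ≤ n) : bb N n ≤ 1 / n := by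
  by_cases hnN : n ≤ N
  · rw [bb_eq hn hnN]
    have := TT_nonneg (n := n) (M := N + 1) (by omega) (by omega)
    linarith
  · unfold bb
    rw [Finset.Ico_eq_empty (by omega), Finset.sum_empty]
    positivity

noncomputable def GG (w : ℂ) (M : ℕ) : ℝ := ∑ n ∈ Finset.Ico 1 M, ((M : ℝ) - n) * (w ^ n).re

lemma conj_helper {w : ℂ} (hw : ‖w‖ = 1) {j M : ℕ} (hj : j ≤ M) :
    w ^ j * (starRingEnd ℂ) (w ^ M) = (starRingEnd ℂ) (w ^ (M - j)) := by
  have hws : w * (starRingEnd ℂ) w = 1 := by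
    rw [Complex.mul_conj]
    rw [Complex.normSq_eq_norm_sq, hw]
    norm_num
  have hM : M = j + (M - j) := by omega
  calc w ^ j * (starRingEnd ℂ) (w ^ M)
      = w ^ j * ((starRingEnd ℂ) w) ^ M := by rw [map_pow]
    _ = w ^ j * (((starRingEnd ℂ) w) ^ j * ((starRingEnd ℂ) w) ^ (M - j)) := by
        rw [← pow_add, ← hM]
    _ = (w * (starRingEnd ℂ) w) ^ j * ((starRingEnd ℂ) w) ^ (M - j) := by ring
    _ = ((starRingEnd ℂ) w) ^ (M - j) := by rw [hws, one_pow, one_mul]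
    _ = (starRingEnd ℂ) (w ^ (M - j)) := by rw [map_pow]

lemma GG_succ (w : ℂ) (M : ℕ) :
    GG w (M + 1) = GG w M + ∑ n ∈ Finset.Ico 1 (M + 1), (w ^ n).re := by
  unfold GG
  have : ∀ n ∈ Finset.Ico 1 (M + 1), ((M : ℝ) + 1 - n) * (w ^ n).re
      = ((M : ℝ) - n) * (w ^ n).re + (w ^ n).re := by intro n _; ring
  push_cast
  rw [Finset.sum_congr rfl this, Finset.sum_add_distrib]
  congr 1
  rcases Nat.eq_zero_or_pos M with rfl | hM
  · simp
  · rw [Finset.sum_Ico_succ_top (by omega : 1 ≤ M)]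
    simp

lemma re_geom_conj {w : ℂ} (hw : ‖w‖ = 1) (M : ℕ) :
    ((∑ j ∈ Finset.range M, w ^ j) * (starRingEnd ℂ) (w ^ M)).re
      = ∑ n ∈ Finset.Ico 1 (M + 1), (w ^ n).re := by
  rw [Finset.sum_mul, Complex.re_sum]
  have h1 : ∀ j ∈ Finset.range M, (w ^ j * (starRingEnd ℂ) (w ^ M)).re = (w ^ (M - j) ).re := by
    intro j hj
    rw [conj_helper hw (le_of_lt (Finset.mem_range.mp hj)), Complex.conj_re]
  rw [Finset.sum_congr rfl h1, Finset.sum_Ico_eq_sum_range]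
  have h2 := Finset.sum_range_reflect (fun j => (w ^ (j + 1)).re) M
  have h3 : ∀ j ∈ Finset.range M, (w ^ (M - 1 - j + 1)).re = (w ^ (M - j)).re := by
    intro j hj
    congr 2
    have := Finset.mem_range.mp hj
    omega
  rw [Finset.sum_congr rfl h3] at h2
  simp only [Nat.add_sub_cancel, Nat.add_comm 1]
  exact h2

lemma normSq_geom {w : ℂ} (hw : ‖w‖ = 1) (M : ℕ) :
    Complex.normSq (∑ j ∈ Finset.range M, w ^ j) = M + 2 * GG w M := by
  induction M with
  | zero => simp [GG]
  | succ M ih =>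
      rw [Finset.sum_range_succ, Complex.normSq_add, ih, re_geom_conj hw, GG_succ]
      have : Complex.normSq (w ^ M) = 1 := by
        rw [Complex.normSq_eq_norm_sq, norm_pow, hw, one_pow, one_pow]
      rw [this]
      push_cast
      ring

lemma GG_lower {w : ℂ} (hw : ‖w‖ = 1) (M : ℕ) : -((M : ℝ) / 2) ≤ GG w M := by
  have h := Complex.normSq_nonneg (∑ j ∈ Finset.range M, w ^ j)
  rw [normSq_geom hw] at h
  linarith

lemma fejer {w : ℂ} (hw : ‖w‖ = 1) {M : ℕ} (hM : 1 ≤ M) :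
    -(1 / 2 : ℝ) ≤ ∑ n ∈ Finset.Ico 1 M, (1 - (n : ℝ) / M) * (w ^ n).re := by
  have hM0 : (0 : ℝ) < M := by exact_mod_cast hM
  have heq : ∑ n ∈ Finset.Ico 1 M, (1 - (n : ℝ) / M) * (w ^ n).re = GG w M / M := by
    unfold GG
    rw [Finset.sum_div]
    apply Finset.sum_congr rfl
    intro n _
    field_simp
  rw [heq, le_div_iff₀ hM0]
  have := GG_lower hw M
  linarith

lemma sum_Icc_pow_eq (w : ℂ) (L : ℕ) :
    (1 - w) * ∑ n ∈ Finset.Icc 1 L, w ^ n = w - w ^ (L + 1) := by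
  induction L with
  | zero => simp
  | succ L ih =>
      rw [show Finset.Icc 1 (L + 1) = Finset.Ico 1 (L + 2) by rfl,
        Finset.sum_Ico_succ_top (by omega : 1 ≤ L + 1)]
      rw [show Finset.Ico 1 (L + 1) = Finset.Icc 1 L by rfl]
      rw [mul_add, ih]
      ring

lemma norm_sum_Icc_le {w : ℂ} (hw : ‖w‖ = 1) (hw1 : w ≠ 1) (L : ℕ) :
    ‖∑ n ∈ Finset.Icc 1 L, w ^ n‖ ≤ 2 / ‖1 - w‖ := by
  have h1w : (1 : ℂ) - w ≠ 0 := sub_ne_zero.mpr (Ne.symm hw1)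
  have h1wn : (0:ℝ) < ‖1 - w‖ := norm_pos_iff.mpr h1w
  have h := sum_Icc_pow_eq w L
  have h2 : ∑ n ∈ Finset.Icc 1 L, w ^ n = (w - w ^ (L + 1)) / (1 - w) := by
    field_simp at h ⊢
    linear_combination h
  rw [h2, norm_div]
  apply div_le_div_of_nonneg_right ?_ (le_of_lt h1wn) |>.trans (le_refl _)
  calc ‖w - w ^ (L + 1)‖ ≤ ‖w‖ + ‖w ^ (L + 1)‖ := norm_sub_le _ _
    _ = 2 := by
        rw [norm_pow, hw]
        norm_num

lemma re_lt_one {w : ℂ} (hw : ‖w‖ = 1) (hw1 : w ≠ 1) : w.re < 1 := by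
  have h1 : |w.re| ≤ 1 := hw ▸ Complex.abs_re_le_norm w
  rcases lt_or_eq_of_le (abs_le.mp h1).2 with h | h
  · exact h
  · exfalso
    apply hw1
    have hsq : w.re ^ 2 + w.im ^ 2 = 1 := by
      have := Complex.sq_norm w
      rw [hw, Complex.normSq_apply] at this
      nlinarith
    have him : w.im = 0 := by nlinarith
    apply Complex.ext <;> simp [h, him]

lemma slit {w : ℂ} (hw : ‖w‖ = 1) (hw1 : w ≠ 1) : (1 - w) ∈ Complex.slitPlane := by
  rw [Complex.mem_slitPlane_iff]
  left
  have := re_lt_one hw hw1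
  simp only [Complex.sub_re, Complex.one_re]
  linarith

lemma tendsto_log_series {w : ℂ} (hw : ‖w‖ = 1) (hw1 : w ≠ 1) :
    Filter.Tendsto (fun L : ℕ => ∑ n ∈ Finset.Icc 1 L, (w ^ n).re / n) Filter.atTop
      (𝓝 (-Real.log (‖1 - w‖))) := by
  classical
  set f : ℕ → ℂ := fun n => w ^ n / n with hf
  -- Dirichlet test
  have hb : ∀ n : ℕ, ‖∑ i ∈ Finset.range n, w ^ (i + 1)‖ ≤ 2 / ‖1 - w‖ := by
    intro n
    have : ∑ i ∈ Finset.range n, w ^ (i + 1) = ∑ k ∈ Finset.Icc 1 n, w ^ k := by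
      rw [show Finset.Icc 1 n = Finset.Ico 1 (n + 1) by rfl, Finset.sum_Ico_eq_sum_range]
      simp only [Nat.add_sub_cancel, Nat.add_comm 1]
    rw [this]
    exact norm_sum_Icc_le hw hw1 n
  have hanti : Antitone (fun i : ℕ => ((i : ℝ) + 1)⁻¹) := by
    intro a b hab
    have : (0:ℝ) < (a:ℝ) + 1 := by positivity
    apply inv_anti₀ this
    exact_mod_cast by omega
  have h0 : Filter.Tendsto (fun i : ℕ => ((i : ℝ) + 1)⁻¹) Filter.atTop (𝓝 0) := by
    have := tendsto_one_div_add_atTop_nhds_zero_nat (𝕜 := ℝ)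
    simpa [one_div] using this
  have hcauchy : CauchySeq (fun n => ∑ i ∈ Finset.range n,
      ((i : ℝ) + 1)⁻¹ • w ^ (i + 1)) :=
    hanti.cauchySeq_series_mul_of_tendsto_zero_of_bounded h0 hb
  obtain ⟨l, hl⟩ := cauchySeq_tendsto_of_complete hcauchy
  have hsum : ∀ n : ℕ, ∑ i ∈ Finset.range n, ((i : ℝ) + 1)⁻¹ • w ^ (i + 1)
      = ∑ i ∈ Finset.range (n + 1), f i := by
    intro n
    rw [Finset.sum_range_succ']
    have hf0 : f 0 = 0 := by simp [hf]
    rw [hf0, add_zero]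
    apply Finset.sum_congr rfl
    intro i _
    simp only [hf, Complex.real_smul]
    push_cast
    ring
  have hl' : Filter.Tendsto (fun n => ∑ i ∈ Finset.range n, f i) Filter.atTop (𝓝 l) := by
    rw [← Filter.tendsto_add_atTop_iff_nat 1]
    apply hl.congr
    intro n
    exact hsum n
  -- Abel limit
  have habel := Complex.tendsto_tsum_powerSeries_nhdsWithin_lt hl'
  have h6 : Filter.Tendsto (fun x : ℝ => ∑' n, f n * (x : ℂ) ^ n) (𝓝[<] (1:ℝ)) (𝓝 l) := by
    rw [Filter.tendsto_map'_iff] at habel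
    exact habel
  have h7 : ∀ x ∈ Set.Ioo (0:ℝ) 1, ∑' n, f n * (x : ℂ) ^ n = -Complex.log (1 - x * w) := by
    intro x hx
    have hnorm : ‖(x : ℂ) * w‖ < 1 := by
      rw [norm_mul, hw, mul_one,
        Complex.norm_of_nonneg hx.1.le]
      exact hx.2
    have hs := Complex.hasSum_taylorSeries_neg_log hnorm
    have heq : (fun n : ℕ => ((x : ℂ) * w) ^ n / n) = fun n => f n * (x : ℂ) ^ n := by
      funext n
      simp only [hf, mul_pow]
      ring
    rw [heq] at hs
    exact hs.tsum_eq
  -- continuity of log at 1 - w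
  have h8 : Filter.Tendsto (fun x : ℝ => -Complex.log (1 - (x : ℂ) * w)) (𝓝[<] (1:ℝ))
      (𝓝 (-Complex.log (1 - w))) := by
    have hc : ContinuousAt (fun x : ℝ => -Complex.log (1 - (x : ℂ) * w)) 1 := by
      have hcont : ContinuousAt (fun x : ℝ => 1 - (x : ℂ) * w) 1 := by fun_prop
      have hlog : ContinuousAt Complex.log (1 - ((1:ℝ) : ℂ) * w) :=
        continuousAt_clog (by simpa using slit hw hw1)
      exact (ContinuousAt.comp (f := fun x : ℝ => 1 - (x : ℂ) * w) hlog hcont).neg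
    have := hc.tendsto.mono_left (nhdsWithin_le_nhds (s := Set.Iio (1:ℝ)))
    simpa using this
  -- identify the limit
  have h6' : Filter.Tendsto (fun x : ℝ => -Complex.log (1 - (x : ℂ) * w)) (𝓝[<] (1:ℝ)) (𝓝 l) := by
    apply h6.congr'
    filter_upwards [Ioo_mem_nhdsLT_of_mem (by constructor <;> norm_num : (1:ℝ) ∈ Set.Ioc 0 1)]
      with x hx
    exact h7 x hx
  have hluniq : l = -Complex.log (1 - w) := tendsto_nhds_unique h6' h8
  subst hluniq
  -- take real parts
  have h10 : Filter.Tendsto (fun n => (∑ i ∈ Finset.range n, f i).re) Filter.atTop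
      (𝓝 (-Real.log (‖1 - w‖))) := by
    have := (Complex.continuous_re.tendsto _).comp hl'
    simpa [Function.comp_def, Complex.log_re] using this
  rw [← Filter.tendsto_add_atTop_iff_nat 1]
  apply h10.comp (Filter.tendsto_add_atTop_nat 2) |>.congr
  intro L
  simp only [Function.comp_apply]
  rw [Complex.re_sum, Finset.sum_range_succ']
  have hf0 : (f 0).re = 0 := by simp [hf]
  rw [hf0, add_zero]
  rw [show Finset.Icc 1 (L + 1) = Finset.Ico 1 (L + 1 + 1) by rfl, Finset.sum_Ico_eq_sum_range]
  simp only [Nat.add_sub_cancel, Nat.add_comm 1]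
  apply Finset.sum_congr rfl
  intro i _
  simp only [hf]
  rw [div_eq_mul_inv, ← Complex.ofReal_natCast, ← Complex.ofReal_inv, mul_comm,
    Complex.re_ofReal_mul]
  ring

lemma TT_zero_le {N : ℕ} (hN : 1 ≤ N) : TT 0 (N + 1) ≤ 2 / N := by
  have h : (1:ℝ) ≤ (N:ℝ) := by exact_mod_cast hN
  unfold TT
  push_cast
  rw [div_le_div_iff₀ (by nlinarith) (by nlinarith)]
  nlinarith

lemma key {N : ℕ} (hN : 1 ≤ N) {w : ℂ} (hw : ‖w‖ = 1) (hw1 : w ≠ 1) :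
    Real.log (‖1 - w‖) ≤ -(∑ n ∈ Finset.Icc 1 N, bb N n * (w ^ n).re) + 1 / N := by
  classical
  set d : ℕ → ℝ := fun n => 1 / n - bb N n with hd
  set D : ℕ → ℝ := fun L => ∑ n ∈ Finset.Icc 1 L, d n * (w ^ n).re with hD
  have hNR : (0:ℝ) < N := by exact_mod_cast hN
  -- (1) convergence of D
  have htend : Filter.Tendsto D Filter.atTop
      (𝓝 (-Real.log (‖1 - w‖) - ∑ n ∈ Finset.Icc 1 N, bb N n * (w ^ n).re)) := by
    have h1 : Filter.Tendsto (fun L : ℕ => (∑ n ∈ Finset.Icc 1 L, (w ^ n).re / n)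
        - ∑ n ∈ Finset.Icc 1 N, bb N n * (w ^ n).re) Filter.atTop
        (𝓝 (-Real.log (‖1 - w‖) - ∑ n ∈ Finset.Icc 1 N, bb N n * (w ^ n).re)) :=
      (tendsto_log_series hw hw1).sub_const _
    apply h1.congr'
    filter_upwards [Filter.eventually_ge_atTop N] with L hL
    have hbbz : ∑ n ∈ Finset.Icc 1 L, bb N n * (w ^ n).re
        = ∑ n ∈ Finset.Icc 1 N, bb N n * (w ^ n).re := by
      symm
      apply Finset.sum_subset
      · apply Finset.Icc_subset_Icc_right hL
      · intro n hn hn'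
        have : N < n := by
          simp only [Finset.mem_Icc] at hn hn'
          omega
        have : bb N n = 0 := by
          unfold bb
          rw [Finset.Ico_eq_empty (by omega), Finset.sum_empty]
        rw [this, zero_mul]
    rw [hD]
    simp only
    rw [← hbbz, ← Finset.sum_sub_distrib]
    apply Finset.sum_congr rfl
    intro n _
    rw [hd]
    ring
  -- (2) lower bound for D L
  have hlow : ∀ L : ℕ, N ≤ L → 1 ≤ L →
      -1 / N - (2 / ‖1 - w‖ + 1) * (1 / L) ≤ D L := by
    intro L hNL hL1
    have hLR : (0:ℝ) < L := by exact_mod_cast hL1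
    have h1w : (1 : ℂ) - w ≠ 0 := sub_ne_zero.mpr (Ne.symm hw1)
    have h1wn : (0:ℝ) < ‖1 - w‖ := norm_pos_iff.mpr h1w
    -- decomposition of d n
    have hdecomp : ∀ n ∈ Finset.Icc 1 L, d n
        = (∑ M ∈ Finset.Ico (max n N + 1) (L + 1), cc M * (1 - (n:ℝ) / M)) + TT n (L + 1) := by
      intro n hn
      rw [Finset.mem_Icc] at hn
      by_cases hcase : n ≤ N
      · have hmax : max n N = N := by omega
        rw [hmax, sum_Ico_TT n (by omega) (by omega), hd]
        simp only
        rw [bb_eq hn.1 hcase]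
        ring
      · have hmax : max n N = n := by omega
        have hbb0 : bb N n = 0 := by
          unfold bb
          rw [Finset.Ico_eq_empty (by omega), Finset.sum_empty]
        rw [hmax, sum_Ico_TT n (by omega) (by omega), TT_self hn.1, hd]
        simp only
        rw [hbb0]
        ring
    have hsplit : D L = (∑ n ∈ Finset.Icc 1 L,
          (∑ M ∈ Finset.Ico (max n N + 1) (L + 1), cc M * (1 - (n:ℝ) / M)) * (w ^ n).re)
        + ∑ n ∈ Finset.Icc 1 L, TT n (L + 1) * (w ^ n).re := by
      rw [hD]
      simp only
      rw [← Finset.sum_add_distrib]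
      apply Finset.sum_congr rfl
      intro n hn
      rw [hdecomp n hn]
      ring
    -- swap the double sum
    have hswap : ∑ n ∈ Finset.Icc 1 L,
          (∑ M ∈ Finset.Ico (max n N + 1) (L + 1), cc M * (1 - (n:ℝ) / M)) * (w ^ n).re
        = ∑ M ∈ Finset.Ico (N + 1) (L + 1),
            cc M * ∑ n ∈ Finset.Ico 1 M, (1 - (n:ℝ) / M) * (w ^ n).re := by
      have step1 : ∀ n ∈ Finset.Icc 1 L,
          (∑ M ∈ Finset.Ico (max n N + 1) (L + 1), cc M * (1 - (n:ℝ) / M)) * (w ^ n).re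
          = ∑ M ∈ Finset.Ico (N + 1) (L + 1),
              (if n < M then cc M * (1 - (n:ℝ) / M) * (w ^ n).re else 0) := by
        intro n hn
        have hfil : Finset.Ico (max n N + 1) (L + 1)
            = (Finset.Ico (N + 1) (L + 1)).filter (fun M => n < M) := by
          ext M
          simp only [Finset.mem_Ico, Finset.mem_filter]
          omega
        rw [hfil, Finset.sum_filter, Finset.sum_mul]
        apply Finset.sum_congr rfl
        intro M _
        rw [ite_mul, zero_mul]
      rw [Finset.sum_congr rfl step1, Finset.sum_comm]
      apply Finset.sum_congr rfl
      intro M hM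
      rw [Finset.mem_Ico] at hM
      have hfil2 : (Finset.Icc 1 L).filter (fun n => n < M) = Finset.Ico 1 M := by
        ext n
        simp only [Finset.mem_Icc, Finset.mem_filter, Finset.mem_Ico]
        omega
      rw [← Finset.sum_filter, hfil2, Finset.mul_sum]
      apply Finset.sum_congr rfl
      intro n _
      ring
    -- bound the Fejer part
    have hfejer : -1 / N ≤ ∑ M ∈ Finset.Ico (N + 1) (L + 1),
        cc M * ∑ n ∈ Finset.Ico 1 M, (1 - (n:ℝ) / M) * (w ^ n).re := by
      have hsumcc : ∑ M ∈ Finset.Ico (N + 1) (L + 1), cc M ≤ 2 / N := by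
        have h0 := sum_Ico_TT 0 (show 2 ≤ N + 1 by omega) (show N + 1 ≤ L + 1 by omega)
        simp only [Nat.cast_zero, zero_div, sub_zero, mul_one] at h0
        rw [h0]
        have h1 := TT_nonneg (n := 0) (M := L + 1) (by omega) (by omega)
        have h2 := TT_zero_le hN
        linarith
      have hterm : ∀ M ∈ Finset.Ico (N + 1) (L + 1),
          cc M * (-(1/2) : ℝ) ≤ cc M * ∑ n ∈ Finset.Ico 1 M, (1 - (n:ℝ) / M) * (w ^ n).re := by
        intro M hM
        rw [Finset.mem_Ico] at hM
        apply mul_le_mul_of_nonneg_left ?_ (cc_nonneg (by omega))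
        have := fejer hw (M := M) (by omega)
        linarith
      calc -1 / N = (2 / N) * (-(1/2) : ℝ) := by ring
        _ ≤ (∑ M ∈ Finset.Ico (N + 1) (L + 1), cc M) * (-(1/2) : ℝ) := by
            apply mul_le_mul_of_nonpos_right hsumcc (by norm_num)
        _ = ∑ M ∈ Finset.Ico (N + 1) (L + 1), cc M * (-(1/2) : ℝ) := by
            rw [Finset.sum_mul]
        _ ≤ _ := Finset.sum_le_sum hterm
    -- bound the tail part
    have htail : -((2 / ‖1 - w‖ + 1) * (1 / L))
        ≤ ∑ n ∈ Finset.Icc 1 L, TT n (L + 1) * (w ^ n).re := by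
      have hTTsplit : ∀ n ∈ Finset.Icc 1 L, TT n (L + 1) * (w ^ n).re
          = (1 / L) * (w ^ n).re + (1 / ((L:ℝ) * (L + 1))) * (((L:ℝ) - n) * (w ^ n).re) := by
        intro n hn
        unfold TT
        push_cast
        rw [show ((L:ℝ) + 1 - 1) = (L:ℝ) by ring]
        field_simp
        ring
      rw [Finset.sum_congr rfl hTTsplit, Finset.sum_add_distrib, ← Finset.mul_sum,
        ← Finset.mul_sum]
      have hre : -(2 / ‖1 - w‖) ≤ ∑ n ∈ Finset.Icc 1 L, (w ^ n).re := by
        rw [← Complex.re_sum]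
        have h1 := (abs_le.mp (Complex.abs_re_le_norm (∑ n ∈ Finset.Icc 1 L, w ^ n))).1
        have h2 := norm_sum_Icc_le hw hw1 L
        linarith
      have hGG : -((L:ℝ) / 2) ≤ ∑ n ∈ Finset.Icc 1 L, ((L:ℝ) - n) * (w ^ n).re := by
        have heq : ∑ n ∈ Finset.Icc 1 L, ((L:ℝ) - n) * (w ^ n).re = GG w L := by
          rw [show Finset.Icc 1 L = Finset.Ico 1 (L + 1) by rfl,
            Finset.sum_Ico_succ_top (by omega : 1 ≤ L)]
          unfold GG
          simp
        rw [heq]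
        exact GG_lower hw L
      have e1 : (0:ℝ) < (L:ℝ) * ((L:ℝ) + 1) := by positivity
      have c1 : (1 / (L:ℝ)) * (-(2 / ‖1 - w‖)) ≤ (1 / (L:ℝ)) * ∑ n ∈ Finset.Icc 1 L, (w ^ n).re := by
        apply mul_le_mul_of_nonneg_left hre (by positivity)
      have c2 : (1 / ((L:ℝ) * ((L:ℝ) + 1))) * (-((L:ℝ) / 2))
          ≤ (1 / ((L:ℝ) * ((L:ℝ) + 1))) * ∑ n ∈ Finset.Icc 1 L, ((L:ℝ) - n) * (w ^ n).re := by
        apply mul_le_mul_of_nonneg_left hGG (by positivity)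
      have c3 : (1 / ((L:ℝ) * ((L:ℝ) + 1))) * (-((L:ℝ) / 2)) = -(1 / (2 * ((L:ℝ) + 1))) := by
        field_simp
      have c4 : -(1 / (2 * ((L:ℝ) + 1))) ≥ -((1/2) * (1 / (L:ℝ))) := by
        have h4 : (1:ℝ) / (2 * ((L:ℝ) + 1)) ≤ 1 / (2 * (L:ℝ)) :=
          div_le_div_of_nonneg_left (by norm_num) (by positivity) (by linarith)
        have h5 : (1:ℝ) / (2 * (L:ℝ)) = (1/2) * (1 / (L:ℝ)) := by
          rw [one_div, one_div, mul_inv]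
          norm_num
        rw [h5] at h4
        linarith
      have c5 : -((2 / ‖1 - w‖ + 1) * (1 / (L:ℝ)))
          = (1 / (L:ℝ)) * (-(2 / ‖1 - w‖)) + (-((1/2) * (1 / (L:ℝ))) + -((1/2) * (1 / (L:ℝ)))) := by
        ring
      rw [c5]
      have := c3 ▸ c2
      have hinv : (0:ℝ) < 1 / (L:ℝ) := by positivity
      linarith [c1, this, c4]
    rw [hsplit, hswap]
    linarith
  -- (3) pass to the limit
  have hlim : -1 / N ≤ -Real.log (‖1 - w‖)
      - ∑ n ∈ Finset.Icc 1 N, bb N n * (w ^ n).re := by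
    have hK : Filter.Tendsto (fun L : ℕ => -1 / (N:ℝ) - (2 / ‖1 - w‖ + 1) * (1 / L))
        Filter.atTop (𝓝 (-1 / N - 0)) := by
      apply Filter.Tendsto.const_sub
      have h1 : Filter.Tendsto (fun L : ℕ => 1 / (L:ℝ)) Filter.atTop (𝓝 0) :=
        tendsto_one_div_atTop_nhds_zero_nat
      have h2 : Filter.Tendsto (fun L : ℕ => (2 / ‖1 - w‖ + 1) * (1 / L))
          Filter.atTop (𝓝 ((2 / ‖1 - w‖ + 1) * 0)) := h1.const_mul _
      simpa using h2
    rw [sub_zero] at hK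
    apply le_of_tendsto_of_tendsto hK htend
    filter_upwards [Filter.eventually_ge_atTop N, Filter.eventually_ge_atTop 1] with L h1 h2
    exact hlow L h1 h2
  rw [neg_div] at hlim
  linarith

lemma sum_bb_le {N : ℕ} (hN : 1 ≤ N) : ∑ n ∈ Finset.Icc 1 N, bb N n ≤ 1 + Real.log N := by
  have h1 : ∑ n ∈ Finset.Icc 1 N, bb N n ≤ ∑ n ∈ Finset.Icc 1 N, 1 / (n:ℝ) :=
    Finset.sum_le_sum (fun n hn => bb_le N (Finset.mem_Icc.mp hn).1)
  have h2 : ∑ n ∈ Finset.Icc 1 N, 1 / (n:ℝ) = ((harmonic N : ℚ) : ℝ) := by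
    rw [harmonic_eq_sum_Icc]
    push_cast
    apply Finset.sum_congr rfl
    intro n _
    rw [one_div]
  have h3 := harmonic_le_one_add_log N
  linarith

end Stmt7

open Stmt7

theorem stmt7 :
    ∃ C : ℝ, 0 < C ∧ ∀ c : ℝ, 1 ≤ c → ∀ m : ℕ, 2 ≤ m → ∀ a : Fin m → ℕ,
      (∀ k, 0 < a k) → StrictMono a →
      (∀ θ : ℝ, -(c * Real.sqrt m) ≤ ∑ k, Real.cos (2 * π * (a k) * θ)) →
      Real.log (Mfun a) ≤ C * c * Real.sqrt m * Real.log m := by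
  refine ⟨10, by norm_num, ?_⟩
  intro c hc m hm a hapos hmono hhyp
  have hm1 : 1 ≤ m := by omega
  have hsqrt1 : (1:ℝ) ≤ Real.sqrt m := by
    rw [show (1:ℝ) = Real.sqrt 1 by simp]
    apply Real.sqrt_le_sqrt
    exact_mod_cast hm1
  have hsqrt0 : (0:ℝ) ≤ Real.sqrt m := by positivity
  have hlogm : (1/2 : ℝ) ≤ Real.log m := by
    have h1 : Real.log 2 ≤ Real.log m := by
      apply Real.log_le_log (by norm_num)
      exact_mod_cast hm
    have h2 := Real.log_two_gt_d9
    linarith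
  set B : ℝ := c * Real.sqrt m * (1 + Real.log m) + 1 with hB
  -- pointwise bound on the circle
  have hkey : ∀ z : ℂ, ‖z‖ = 1 →
      ∏ k, ‖1 - z ^ (a k)‖ ≤ Real.exp B := by
    intro z hz
    by_cases hex : ∃ k, z ^ (a k) = 1
    · obtain ⟨k, hk⟩ := hex
      have : ∏ k, ‖1 - z ^ (a k)‖ = 0 := by
        apply Finset.prod_eq_zero (Finset.mem_univ k)
        rw [hk]
        simp
      rw [this]
      exact le_of_lt (Real.exp_pos B)
    · push_neg at hex
      have habs : ∀ k, ‖z ^ (a k)‖ = 1 := by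
        intro k
        rw [norm_pow, hz, one_pow]
      have hne : ∀ k, (1:ℂ) - z ^ (a k) ≠ 0 := fun k =>
        sub_ne_zero.mpr (Ne.symm (hex k))
      have habspos : ∀ k, 0 < ‖1 - z ^ (a k)‖ := fun k => by
        rw [norm_pos_iff]
        exact hne k
      -- the hypothesis in terms of powers of z
      have hS : ∀ n : ℕ, 1 ≤ n → -(c * Real.sqrt m) ≤ ∑ k, ((z ^ (a k)) ^ n).re := by
        intro n hn
        have harg := Complex.norm_mul_exp_arg_mul_I z
        rw [hz, Complex.ofReal_one, one_mul] at harg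
        set t := Complex.arg z with ht
        have hre : ∀ j : ℕ, ((z ^ j : ℂ)).re = Real.cos (j * t) := by
          intro j
          rw [← harg, ← Complex.exp_nat_mul]
          rw [show (j : ℂ) * ((t:ℂ) * Complex.I) = ((j * t : ℝ) : ℂ) * Complex.I by push_cast; ring]
          rw [Complex.exp_ofReal_mul_I_re]
        have := hhyp (n * t / (2 * π))
        have hcongr : ∀ k, Real.cos (2 * π * (a k) * (n * t / (2 * π)))
            = ((z ^ (a k)) ^ n).re := by
          intro k
          rw [← pow_mul, hre (a k * n)]
          congr 1
          have hπ : (π : ℝ) ≠ 0 := Real.pi_ne_zero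
          field_simp
          push_cast
          ring
        rw [Finset.sum_congr rfl (fun k _ => hcongr k)] at this
        exact this
      -- apply key to each factor and sum
      have hlog : ∑ k, Real.log (‖1 - z ^ (a k)‖) ≤ B := by
        have h1 : ∀ k : Fin m, Real.log (‖1 - z ^ (a k)‖)
            ≤ -(∑ n ∈ Finset.Icc 1 m, bb m n * ((z ^ (a k)) ^ n).re) + 1 / m :=
          fun k => key hm1 (habs k) (hex k)
        have h2 : ∑ k, Real.log (‖1 - z ^ (a k)‖)
            ≤ ∑ k : Fin m, (-(∑ n ∈ Finset.Icc 1 m, bb m n * ((z ^ (a k)) ^ n).re) + 1 / m) :=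
          Finset.sum_le_sum (fun k _ => h1 k)
        have h3 : ∑ k : Fin m, (-(∑ n ∈ Finset.Icc 1 m, bb m n * ((z ^ (a k)) ^ n).re) + 1 / m)
            = -(∑ n ∈ Finset.Icc 1 m, bb m n * ∑ k : Fin m, ((z ^ (a k)) ^ n).re) + 1 := by
          rw [Finset.sum_add_distrib]
          congr 1
          · rw [Finset.sum_neg_distrib]
            congr 1
            rw [Finset.sum_comm]
            apply Finset.sum_congr rfl
            intro n _
            rw [Finset.mul_sum]
          · rw [Finset.sum_const, Finset.card_univ, Fintype.card_fin, nsmul_eq_mul]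
            have : (m:ℝ) ≠ 0 := by positivity
            field_simp
        have h4 : -(∑ n ∈ Finset.Icc 1 m, bb m n * ∑ k : Fin m, ((z ^ (a k)) ^ n).re)
            ≤ c * Real.sqrt m * (1 + Real.log m) := by
          have h5 : ∀ n ∈ Finset.Icc 1 m,
              -(bb m n * ∑ k : Fin m, ((z ^ (a k)) ^ n).re) ≤ bb m n * (c * Real.sqrt m) := by
            intro n hn
            rw [Finset.mem_Icc] at hn
            have hbbn := bb_nonneg m n hn.1
            have hSn := hS n hn.1
            nlinarith
          calc -(∑ n ∈ Finset.Icc 1 m, bb m n * ∑ k : Fin m, ((z ^ (a k)) ^ n).re)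
              = ∑ n ∈ Finset.Icc 1 m, -(bb m n * ∑ k : Fin m, ((z ^ (a k)) ^ n).re) := by
                rw [Finset.sum_neg_distrib]
            _ ≤ ∑ n ∈ Finset.Icc 1 m, bb m n * (c * Real.sqrt m) := Finset.sum_le_sum h5
            _ = (∑ n ∈ Finset.Icc 1 m, bb m n) * (c * Real.sqrt m) := by rw [Finset.sum_mul]
            _ ≤ (1 + Real.log m) * (c * Real.sqrt m) := by
                apply mul_le_mul_of_nonneg_right (sum_bb_le hm1)
                positivity
            _ = c * Real.sqrt m * (1 + Real.log m) := by ring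
        calc ∑ k, Real.log (‖1 - z ^ (a k)‖) ≤ _ := h2
          _ = _ := h3
          _ ≤ c * Real.sqrt m * (1 + Real.log m) + 1 := by linarith
          _ = B := by rw [hB]
      have hprod : ∏ k, ‖1 - z ^ (a k)‖
          = Real.exp (∑ k, Real.log (‖1 - z ^ (a k)‖)) := by
        rw [Real.exp_sum]
        apply Finset.prod_congr rfl
        intro k _
        rw [Real.exp_log (habspos k)]
      rw [hprod]
      exact Real.exp_le_exp.mpr hlog
  have hnonempty : Nonempty (Metric.sphere (0:ℂ) 1) := ⟨⟨1, by simp⟩⟩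
  have hmem : ∀ z : Metric.sphere (0:ℂ) 1, ‖(z : ℂ)‖ = 1 := by
    intro z
    have h := z.2
    rw [mem_sphere_zero_iff_norm] at h
    exact h
  have hMle : Mfun a ≤ Real.exp B := by
    apply ciSup_le
    intro z
    exact hkey z (hmem z)
  have h0 : 0 ≤ Mfun a := by
    have hbdd : BddAbove (Set.range fun z : Metric.sphere (0:ℂ) 1 =>
        ∏ k, ‖1 - (z:ℂ) ^ (a k)‖) := by
      refine ⟨Real.exp B, ?_⟩
      rintro x ⟨z, rfl⟩
      exact hkey z (hmem z)
    have hle := le_ciSup hbdd (⟨1, by simp⟩ : Metric.sphere (0:ℂ) 1)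
    refine le_trans ?_ hle
    apply Finset.prod_nonneg
    intro k _
    positivity
  have hs1 : (1:ℝ) ≤ c * Real.sqrt m := by nlinarith
  have hfin : B ≤ 10 * c * Real.sqrt m * Real.log m := by
    rw [hB]
    nlinarith [mul_le_mul_of_nonneg_left hlogm (le_trans zero_le_one hs1)]
  rcases eq_or_lt_of_le h0 with heq | hpos
  · rw [← heq, Real.log_zero]
    nlinarith
  · have hlog := (Real.log_le_iff_le_exp hpos).mpr hMle
    linarith
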